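/- arXiv:math/0607035 — 2 statements merged into one kernel-verified Lean document; each statement's English description precedes it below -/
import Mathlib

section
/- Let A = R/I be a graded Artinian algebra and L a general linear form. If dim_k(0 :_A L)_d > (n−1)·dim_k(0 :_A L)_{d+1} for some d > 0, then A has a nonzero socle element in degree d, i.e., soc(A)_d ≠ 0. -/
open MvPolynomial Module Submodule

noncomputable section

/-- The degree of a monomial exponent vector. -/
def monDeg {n : ℕ} (μ : Fin n →₀ ℕ) : ℕ := ∑ i, μ i

variable (k : Type*) [Field k] {n : ℕ}

/-- A property `P` of tuples holds *generically* if it holds on a nonempty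
Zariski-open subset of parameter space. -/
def Generic {ι : Type*} (P : (ι → k) → Prop) : Prop :=
  ∃ p : MvPolynomial ι k, p ≠ 0 ∧ ∀ c : ι → k, MvPolynomial.eval c p ≠ 0 → P c

/-- The linear form with coefficient vector `c`. -/
def linForm (c : Fin n → k) : MvPolynomial (Fin n) k := ∑ i, MvPolynomial.C (c i) * X i

/-- `dim_k I_d`, the dimension of the degree-`d` piece of a homogeneous ideal. -/
def idim (I : Ideal (MvPolynomial (Fin n) k)) (d : ℕ) : ℕ :=
  finrank k ↥(Submodule.restrictScalars k I ⊓ homogeneousSubmodule (Fin n) k d)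

/-- The Hilbert function of `A = R/I`. -/
def hilb (I : Ideal (MvPolynomial (Fin n) k)) (d : ℕ) : ℕ :=
  finrank k ↥(homogeneousSubmodule (Fin n) k d) - idim k I d

/-- The reduction number `r₁(R/I)`: the least `ℓ` such that for a general linear
form `L`, `(R/(I+(L)))_{ℓ+1} = 0`. -/
def redNum (I : Ideal (MvPolynomial (Fin n) k)) : ℕ :=
  sInf {ℓ : ℕ | Generic k fun c : Fin n → k =>
    hilb k (I ⊔ Ideal.span {linForm k c}) (ℓ + 1) = 0}

/-- The degree-`d` part of the preimage in `R` of the socle of `A = R/I`: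
homogeneous elements of degree `d` killed by every variable modulo `I`. -/
def socPiece (I : Ideal (MvPolynomial (Fin n) k)) (d : ℕ) :
    Submodule k (MvPolynomial (Fin n) k) :=
  homogeneousSubmodule (Fin n) k d ⊓
    ⨅ i : Fin n, Submodule.comap (LinearMap.mulLeft k (X i)) (Submodule.restrictScalars k I)

/-- `dim_k soc(R/I)_d`. -/
def socDim (I : Ideal (MvPolynomial (Fin n) k)) (d : ℕ) : ℕ :=
  finrank k ↥(socPiece k I d) - idim k I d

/-- `R/I` is level with socle degree `s` : the socle is concentrated in degree `s`. -/
def IsLevel (I : Ideal (MvPolynomial (Fin n) k)) (s : ℕ) : Prop :=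
  ∀ d : ℕ, d ≠ s → ∀ f ∈ socPiece k I d, f ∈ I

/-- `dim_k (0 :_{R/I} L)_d` where `L` is the linear form with coefficients `c`. -/
def annDim (I : Ideal (MvPolynomial (Fin n) k)) (c : Fin n → k) (d : ℕ) : ℕ :=
  finrank k ↥(homogeneousSubmodule (Fin n) k d ⊓
      Submodule.comap (LinearMap.mulLeft k (linForm k c)) (Submodule.restrictScalars k I))
    - idim k I d

/-- `dim_k ((J : x)/J)_d` for `x` a variable (or any polynomial). -/
def colonDim (J : Ideal (MvPolynomial (Fin n) k)) (x : MvPolynomial (Fin n) k) (d : ℕ) : ℕ :=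
  finrank k ↥(homogeneousSubmodule (Fin n) k d ⊓
      Submodule.comap (LinearMap.mulLeft k x) (Submodule.restrictScalars k J))
    - idim k J d

/-- `R/I` has the Weak Lefschetz Property: there is a linear form `L` such that
each multiplication map `(R/I)_i → (R/I)_{i+1}` is injective or surjective. -/
def HasWLP (I : Ideal (MvPolynomial (Fin n) k)) : Prop :=
  ∃ c : Fin n → k, ∀ i : ℕ,
    (∀ f ∈ homogeneousSubmodule (Fin n) k i, linForm k c * f ∈ I → f ∈ I) ∨
    hilb k (I ⊔ Ideal.span {linForm k c}) (i + 1) = 0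

/-! ### Binomial expansions -/

/-- The largest `m` with `C(m,i) ≤ h` (junk value if unbounded). -/
def msup (h i : ℕ) : ℕ := sSup {m : ℕ | Nat.choose m i ≤ h}

/-- Auxiliary greedy binomial-expansion sum. -/
def expandAux (g : ℕ → ℕ → ℕ) : ℕ → ℕ → ℕ
  | 0, _ => 0
  | i + 1, h =>
    if h = 0 then 0
    else g (msup h (i + 1)) (i + 1) +
      expandAux g i (h - Nat.choose (msup h (i + 1)) (i + 1))

/-- `(h_{(i)})⁻ = C(m_i−1,i)+⋯+C(m_j−1,j)` from the `i`-binomial expansion of `h`. -/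
def lowerDec (h i : ℕ) : ℕ := expandAux (fun m t => Nat.choose (m - 1) t) i h

/-- Macaulay growth `h^{⟨i⟩} = C(m_i+1,i+1)+⋯+C(m_j+1,j+1)`. -/
def macGrow (h i : ℕ) : ℕ := expandAux (fun m t => Nat.choose (m + 1) (t + 1)) i h

/-- A sequence is an O-sequence if it starts at 1 and satisfies Macaulay's bound. -/
def IsOSeq (h : ℕ → ℕ) : Prop :=
  h 0 = 1 ∧ ∀ d : ℕ, 1 ≤ d → h (d + 1) ≤ macGrow (h d) d

/-! ### Graded Betti numbers via the Koszul complex -/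

/-- The degree-`z` piece of a homogeneous ideal, indexed by `ℤ` (zero in negative degrees). -/
def pieceZ (I : Ideal (MvPolynomial (Fin n) k)) (z : ℤ) :
    Submodule k (MvPolynomial (Fin n) k) :=
  if 0 ≤ z then Submodule.restrictScalars k I ⊓ homogeneousSubmodule (Fin n) k z.toNat else ⊥

theorem mulX_mem_pieceZ (I : Ideal (MvPolynomial (Fin n) k)) (i : Fin n) {z : ℤ}
    {x : MvPolynomial (Fin n) k} (hx : x ∈ pieceZ k I z) : X i * x ∈ pieceZ k I (z + 1) := by
  by_cases hz : 0 ≤ z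
  · have hz1 : 0 ≤ z + 1 := by omega
    simp only [pieceZ, if_pos hz, Submodule.mem_inf, Submodule.restrictScalars_mem,
      mem_homogeneousSubmodule] at hx
    simp only [pieceZ, if_pos hz1, Submodule.mem_inf, Submodule.restrictScalars_mem,
      mem_homogeneousSubmodule]
    refine ⟨I.mul_mem_left _ hx.1, ?_⟩
    have := (MvPolynomial.isHomogeneous_X k i).mul hx.2
    have hnat : (z + 1).toNat = 1 + z.toNat := by omega
    rwa [hnat]
  · simp only [pieceZ, if_neg hz, Submodule.mem_bot] at hx
    subst hx
    rw [mul_zero]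
    exact Submodule.zero_mem _

/-- Multiplication by the variable `X i`, raising the degree by one. -/
def mulXmap (I : Ideal (MvPolynomial (Fin n) k)) (i : Fin n) {z w : ℤ} (hw : w = z + 1) :
    ↥(pieceZ k I z) →ₗ[k] ↥(pieceZ k I w) :=
  hw ▸ (LinearMap.mulLeft k (X i)).restrict (fun x hx => mulX_mem_pieceZ k I i hx)

/-- Index type for the Koszul complex: `q`-element subsets of the variables. -/
abbrev kIdx (n q : ℕ) : Type := {S : Finset (Fin n) // S.card = q}

/-- The degree-`j` strand of the `q`-th term of the Koszul complex of `I`. -/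
abbrev kSpace (I : Ideal (MvPolynomial (Fin n) k)) (q : ℕ) (j : ℤ) : Type _ :=
  ∀ _ : kIdx n q, ↥(pieceZ k I (j - q))

/-- The Koszul differential `K_{q+1} → K_q` (degree-`j` strand). -/
def koszulD (I : Ideal (MvPolynomial (Fin n) k)) (q : ℕ) (j : ℤ) :
    kSpace k I (q + 1) j →ₗ[k] kSpace k I q j :=
  LinearMap.pi fun T =>
    ∑ i ∈ (Finset.univ \ T.1).attach,
      ((-1 : k) ^ (T.1.filter (fun l => l < i.1)).card) •
        ((mulXmap k I i.1 (show (j - (q : ℤ)) = (j - ((q : ℕ) + 1 : ℕ)) + 1 by push_cast; ring)).comp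
          (LinearMap.proj (⟨insert i.1 T.1, by
            have hi : i.1 ∉ T.1 := by
              have := i.2
              simp only [Finset.mem_sdiff, Finset.mem_univ, true_and] at this
              exact this
            rw [Finset.card_insert_of_notMem hi, T.2]⟩ : kIdx n (q + 1))))

/-- The graded Betti number `β_{q,j}(I) = dim_k Tor_q^R(I,k)_j`, computed as the
dimension of the homology of the degree-`j` strand of the Koszul complex of `I`. -/
def betti (I : Ideal (MvPolynomial (Fin n) k)) (q j : ℕ) : ℕ :=
  match q with
  | 0 => finrank k (kSpace k I 0 (j : ℤ)) - finrank k ↥(LinearMap.range (koszulD k I 0 (j : ℤ)))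
  | p + 1 =>
    finrank k ↥(LinearMap.ker (koszulD k I p (j : ℤ))) -
      finrank k ↥(LinearMap.range (koszulD k I (p + 1) (j : ℤ)))

/-- `J` is `m`-regular: `β_{p,j}(J) = 0` whenever `j > m + p`. -/
def IsMReg (m : ℕ) (J : Ideal (MvPolynomial (Fin n) k)) : Prop :=
  ∀ p j : ℕ, m + p < j → betti k J p j = 0

/-! ### Monomial ideals, initial ideals, Gin and lex-segment ideals -/

/-- The degree reverse lexicographic order (as a strict relation) on exponent
vectors, for `x_1 > x_2 > ⋯ > x_n`. -/
def rlLT {n : ℕ} (μ ν : Fin n →₀ ℕ) : Prop :=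
  monDeg μ < monDeg ν ∨
    (monDeg μ = monDeg ν ∧ ∃ i : Fin n, ν i < μ i ∧ ∀ l : Fin n, i < l → μ l = ν l)

/-- The lexicographic order (as a strict relation) on exponent vectors,
for `x_1 > x_2 > ⋯ > x_n`. -/
def lexLT {n : ℕ} (μ ν : Fin n →₀ ℕ) : Prop :=
  ∃ i : Fin n, μ i < ν i ∧ ∀ l : Fin n, l < i → μ l = ν l

/-- `μ` is the leading (degrevlex-largest) monomial of `f`. -/
def IsLeadMon (f : MvPolynomial (Fin n) k) (μ : Fin n →₀ ℕ) : Prop :=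
  f ≠ 0 ∧ μ ∈ f.support ∧ ∀ ν ∈ f.support, ν ≠ μ → rlLT ν μ

/-- The initial ideal of `I` with respect to the degree reverse lexicographic order. -/
def initialIdeal (I : Ideal (MvPolynomial (Fin n) k)) : Ideal (MvPolynomial (Fin n) k) :=
  Ideal.span {x | ∃ f ∈ I, ∃ μ, IsLeadMon k f μ ∧ x = MvPolynomial.monomial μ (1 : k)}

/-- The linear change of coordinates determined by the matrix `g`. -/
def changeCoord (g : Fin n → Fin n → k) :
    MvPolynomial (Fin n) k →ₐ[k] MvPolynomial (Fin n) k :=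
  MvPolynomial.aeval fun i => ∑ j, MvPolynomial.C (g i j) * X j

/-- `J` is the generic initial ideal (revlex) of `I`: for a generic change of
coordinates `g`, the initial ideal of `g·I` equals `J`. -/
def IsGin (I J : Ideal (MvPolynomial (Fin n) k)) : Prop :=
  ∃ p : MvPolynomial (Fin n × Fin n) k, p ≠ 0 ∧
    ∀ g : Fin n → Fin n → k, MvPolynomial.eval (fun ij => g ij.1 ij.2) p ≠ 0 →
      initialIdeal k (Ideal.map (changeCoord k g) I) = J

/-- The lex-segment ideal associated to `I`: in each degree it is spanned by the
`dim_k I_d` lexicographically largest monomials. -/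
def lexIdeal (I : Ideal (MvPolynomial (Fin n) k)) : Ideal (MvPolynomial (Fin n) k) :=
  Ideal.span {x | ∃ μ : Fin n →₀ ℕ,
    Nat.card {ν : Fin n →₀ ℕ // monDeg ν = monDeg μ ∧ (ν = μ ∨ lexLT μ ν)} ≤ idim k I (monDeg μ)
    ∧ x = MvPolynomial.monomial μ (1 : k)}

/-- A monomial ideal: with every polynomial it contains all of its monomials. -/
def IsMonomialIdeal (J : Ideal (MvPolynomial (Fin n) k)) : Prop :=
  ∀ f ∈ J, ∀ μ ∈ f.support, MvPolynomial.monomial μ (1 : k) ∈ J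

/-- A stable monomial ideal: for every monomial `w ∈ J` and `j < m(w)`,
`x_j·w/x_{m(w)} ∈ J`, where `m(w)` is the largest variable dividing `w`. -/
def IsStable (J : Ideal (MvPolynomial (Fin n) k)) : Prop :=
  IsMonomialIdeal k J ∧
    ∀ (μ : Fin n →₀ ℕ) (i j : Fin n), MvPolynomial.monomial μ (1 : k) ∈ J → μ i ≠ 0 →
      (∀ l : Fin n, i < l → μ l = 0) → j < i →
      MvPolynomial.monomial (μ + Finsupp.single j 1 - Finsupp.single i 1) (1 : k) ∈ J

/-- A lex-segment ideal: a monomial ideal whose monomials in each degree form an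
upward-closed set in the lexicographic order. -/
def IsLexSegmentIdeal (J : Ideal (MvPolynomial (Fin n) k)) : Prop :=
  IsMonomialIdeal k J ∧
    ∀ μ ν : Fin n →₀ ℕ, monDeg μ = monDeg ν → MvPolynomial.monomial μ (1 : k) ∈ J →
      lexLT μ ν → MvPolynomial.monomial ν (1 : k) ∈ J

/-- `μ` is a minimal monomial generator of the monomial ideal `J`. -/
def IsMinGen (J : Ideal (MvPolynomial (Fin n) k)) (μ : Fin n →₀ ℕ) : Prop :=
  MvPolynomial.monomial μ (1 : k) ∈ J ∧
    ∀ i : Fin n, μ i ≠ 0 → MvPolynomial.monomial (μ - Finsupp.single i 1) (1 : k) ∉ J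

/-- The ideal `(I_{≤ t})` generated by the homogeneous elements of `I` of degree `≤ t`. -/
def trunc (I : Ideal (MvPolynomial (Fin n) k)) (t : ℕ) : Ideal (MvPolynomial (Fin n) k) :=
  Ideal.span {f | f ∈ I ∧ ∃ e ≤ t, f.IsHomogeneous e}

end

noncomputable section

variable (k : Type*) [Field k] {n : ℕ}

/-- `I` is a homogeneous ideal: it contains all homogeneous components of its elements. -/
def IsHomogIdeal (I : Ideal (MvPolynomial (Fin n) k)) : Prop :=
  ∀ f ∈ I, ∀ e : ℕ, MvPolynomial.homogeneousComponent e f ∈ I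

end

section Aux

open MvPolynomial Module Submodule

variable {k : Type*} [Field k] {n : ℕ}

lemma fdim_of_le {M : Type*} [AddCommGroup M] [Module k M]
    {p q : Submodule k M} (h : p ≤ q) [FiniteDimensional k q] :
    FiniteDimensional k p :=
  (Submodule.comapSubtypeEquivOfLe h).finiteDimensional

lemma homSub_findim (d : ℕ) : FiniteDimensional k ↥(homogeneousSubmodule (Fin n) k d) :=
  fdim_of_le (q := restrictTotalDegree (Fin n) k d)
    (fun f hf => (mem_restrictTotalDegree _ _ _).2
      ((mem_homogeneousSubmodule _ _).1 hf).totalDegree_le)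

lemma exists_eval_ne [CharZero k] {p : MvPolynomial (Fin n) k} (hp : p ≠ 0) :
    ∃ c : Fin n → k, MvPolynomial.eval c p ≠ 0 := by
  by_contra h
  push_neg at h
  exact hp (MvPolynomial.funext fun x => by rw [h x, map_zero])

set_option maxHeartbeats 2000000
set_option synthInstance.maxHeartbeats 1000000

lemma aux_main (I : Ideal (MvPolynomial (Fin n) k))
    (c : Fin n → k) (j : Fin n) (hcj : c j ≠ 0) (d : ℕ)
    (hsoc : ∀ f ∈ socPiece k I d, f ∈ I) :
    annDim k I c d ≤ (n - 1) * annDim k I c (d + 1) := by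
  classical
  unfold annDim
  set L : MvPolynomial (Fin n) k := linForm k c with hLdef
  set V : Submodule k (MvPolynomial (Fin n) k) := homogeneousSubmodule (Fin n) k d ⊓
      Submodule.comap (LinearMap.mulLeft k L) (Submodule.restrictScalars k I) with hVdef
  set W : Submodule k (MvPolynomial (Fin n) k) := homogeneousSubmodule (Fin n) k (d + 1) ⊓
      Submodule.comap (LinearMap.mulLeft k L) (Submodule.restrictScalars k I) with hWdef
  haveI := homSub_findim (k := k) (n := n) d
  haveI := homSub_findim (k := k) (n := n) (d + 1)
  haveI : FiniteDimensional k V := fdim_of_le inf_le_left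
  haveI : FiniteDimensional k W := fdim_of_le inf_le_left
  have hId0le : Submodule.restrictScalars k I ⊓ homogeneousSubmodule (Fin n) k d ≤ V := by
    intro f hf
    rw [Submodule.mem_inf] at hf
    refine Submodule.mem_inf.2 ⟨hf.2, ?_⟩
    simp only [Submodule.mem_comap, LinearMap.mulLeft_apply, Submodule.restrictScalars_mem]
    exact I.mul_mem_left _ hf.1
  have hId1le : Submodule.restrictScalars k I ⊓ homogeneousSubmodule (Fin n) k (d + 1) ≤ W := by
    intro f hf
    rw [Submodule.mem_inf] at hf
    refine Submodule.mem_inf.2 ⟨hf.2, ?_⟩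
    simp only [Submodule.mem_comap, LinearMap.mulLeft_apply, Submodule.restrictScalars_mem]
    exact I.mul_mem_left _ hf.1
  set P : Submodule k W :=
    (Submodule.restrictScalars k I ⊓ homogeneousSubmodule (Fin n) k (d + 1)).comap W.subtype
    with hPdef
  have hmem : ∀ (i : Fin n), ∀ x ∈ V, (X i : MvPolynomial (Fin n) k) * x ∈ W := by
    intro i x hx
    rw [Submodule.mem_inf] at hx
    refine Submodule.mem_inf.2 ⟨?_, ?_⟩
    · rw [mem_homogeneousSubmodule] at hx ⊢
      have := (isHomogeneous_X k i).mul hx.1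
      rwa [Nat.add_comm] at this
    · have hx2 := hx.2
      simp only [Submodule.mem_comap, LinearMap.mulLeft_apply,
        Submodule.restrictScalars_mem] at hx2 ⊢
      have heq : L * (X i * x) = X i * (L * x) := by ring
      rw [heq]
      exact I.mul_mem_left _ hx2
  set Φ : V →ₗ[k] ({ i : Fin n // i ≠ j } → (W ⧸ P)) :=
    LinearMap.pi fun i => P.mkQ.comp ((LinearMap.mulLeft k (X i.1)).restrict (hmem i.1)) with hΦdef
  have hker : LinearMap.ker Φ
      = (Submodule.restrictScalars k I ⊓ homogeneousSubmodule (Fin n) k d).comap V.subtype := by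
    ext x
    simp only [LinearMap.mem_ker, Submodule.mem_comap, Submodule.subtype_apply,
      Submodule.mem_inf, Submodule.restrictScalars_mem]
    constructor
    · intro hx0
      have hXI : ∀ i : Fin n, i ≠ j → (X i) * (x : MvPolynomial (Fin n) k) ∈ I := by
        intro i hij
        have h1 := congrFun hx0 ⟨i, hij⟩
        rw [hΦdef, LinearMap.pi_apply, LinearMap.comp_apply, Submodule.mkQ_apply,
          Pi.zero_apply, Submodule.Quotient.mk_eq_zero] at h1
        have h2 := (Submodule.mem_comap.1 h1)
        rw [Submodule.subtype_apply] at h2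
        have h3 := (Submodule.mem_inf.1 h2).1
        exact h3
      have hLx : L * (x : MvPolynomial (Fin n) k) ∈ I := by
        have := (Submodule.mem_inf.1 x.2).2
        simpa only [Submodule.mem_comap, LinearMap.mulLeft_apply,
          Submodule.restrictScalars_mem] using this
      have hsplit : L * (x : MvPolynomial (Fin n) k)
          = C (c j) * X j * (x : MvPolynomial (Fin n) k)
            + ∑ i ∈ Finset.univ.erase j, C (c i) * X i * (x : MvPolynomial (Fin n) k) := by
        rw [hLdef, linForm, Finset.sum_mul, ← Finset.add_sum_erase _ _ (Finset.mem_univ j)]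
      have hsum : (∑ i ∈ Finset.univ.erase j,
          C (c i) * X i * (x : MvPolynomial (Fin n) k)) ∈ I := by
        refine Ideal.sum_mem _ fun i hi => ?_
        have hXi := hXI i (Finset.ne_of_mem_erase hi)
        rw [mul_assoc]
        exact I.mul_mem_left _ hXi
      have hCj : C (c j) * X j * (x : MvPolynomial (Fin n) k) ∈ I := by
        have h4 := I.sub_mem hLx hsum
        rwa [hsplit, add_sub_cancel_right] at h4
      have hXj : X j * (x : MvPolynomial (Fin n) k) ∈ I := by
        have h5 := I.mul_mem_left (C (c j)⁻¹) hCj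
        rwa [show C (c j)⁻¹ * (C (c j) * X j * (x : MvPolynomial (Fin n) k))
            = (C (c j)⁻¹ * C (c j)) * (X j * (x : MvPolynomial (Fin n) k)) by ring,
          ← C_mul, inv_mul_cancel₀ hcj, C_1, one_mul] at h5
      have hxsoc : (x : MvPolynomial (Fin n) k) ∈ socPiece k I d := by
        refine Submodule.mem_inf.2 ⟨(Submodule.mem_inf.1 x.2).1, ?_⟩
        rw [Submodule.mem_iInf]
        intro i
        simp only [Submodule.mem_comap, LinearMap.mulLeft_apply,
          Submodule.restrictScalars_mem]
        rcases eq_or_ne i j with rfl | hij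
        · exact hXj
        · exact hXI i hij
      exact ⟨hsoc _ hxsoc, (Submodule.mem_inf.1 x.2).1⟩
    · intro hx
      funext i
      rw [hΦdef, LinearMap.pi_apply, LinearMap.comp_apply, Submodule.mkQ_apply,
        Pi.zero_apply, Submodule.Quotient.mk_eq_zero]
      rw [hPdef, Submodule.mem_comap, Submodule.subtype_apply]
      refine Submodule.mem_inf.2 ⟨?_, ?_⟩
      · simp only [Submodule.restrictScalars_mem, LinearMap.mulLeft_apply]
        exact I.mul_mem_left _ hx.1
      · exact (Submodule.mem_inf.1 (hmem i.1 (x : MvPolynomial (Fin n) k) x.2)).1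
  have hrk : finrank k ↥(LinearMap.range Φ) + finrank k ↥(LinearMap.ker Φ) = finrank k V :=
    LinearMap.finrank_range_add_finrank_ker Φ
  have hkerrk : finrank k ↥(LinearMap.ker Φ) = idim k I d := by
    rw [hker]
    exact (Submodule.comapSubtypeEquivOfLe hId0le).finrank_eq
  have hPrk : finrank k P = idim k I (d + 1) :=
    (Submodule.comapSubtypeEquivOfLe hId1le).finrank_eq
  have hQrk : finrank k (W ⧸ P) = finrank k W - idim k I (d + 1) := by
    have := Submodule.finrank_quotient_add_finrank P
    omega
  have hcard : Fintype.card { i : Fin n // i ≠ j } = n - 1 := by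
    rw [Fintype.card_subtype_compl]
    simp
  have hrange : finrank k ↥(LinearMap.range Φ)
      ≤ (n - 1) * (finrank k W - idim k I (d + 1)) := by
    have h6 : finrank k ↥(LinearMap.range Φ)
        ≤ finrank k ({ i : Fin n // i ≠ j } → (W ⧸ P)) := Submodule.finrank_le _
    haveI : Module.Free k (W ⧸ P) := Module.Free.of_divisionRing k _
    rw [Module.finrank_pi_fintype, Finset.sum_const, Finset.card_univ, smul_eq_mul,
      hcard, hQrk] at h6
    exact h6
  have hfin : finrank k V - idim k I d ≤ finrank k ↥(LinearMap.range Φ) := by omega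
  exact hfin.trans hrange

end Aux

/-- If for a general linear form `L` one has
`dim_k (0 :_A L)_d > (n-1)·dim_k (0 :_A L)_{d+1}` for some `d > 0`, then the graded
Artinian algebra `A = R/I` has a nonzero socle element in degree `d`. -/
theorem stmt_0 {k : Type*} [Field k] [CharZero k] {n : ℕ}
    (I : Ideal (MvPolynomial (Fin n) k)) (hI : IsHomogIdeal k I)
    (hart : ∃ N : ℕ, ∀ t : ℕ, N ≤ t → hilb k I t = 0)
    (d : ℕ) (hd : 0 < d)
    (hgen : Generic k fun c : Fin n → k =>
      (n - 1) * annDim k I c (d + 1) < annDim k I c d) :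
    ∃ f ∈ socPiece k I d, f ∉ I := by
  classical
  by_contra hcon
  push_neg at hcon
  obtain ⟨p, hp0, hp⟩ := hgen
  rcases Nat.eq_zero_or_pos n with hn | hn
  · subst hn
    obtain ⟨c, hc⟩ := exists_eval_ne hp0
    have key : (0 - 1) * annDim k I c (d + 1) < annDim k I c d := hp c hc
    have hbot : (homogeneousSubmodule (Fin 0) k d ⊓
        Submodule.comap (LinearMap.mulLeft k (linForm k c))
          (Submodule.restrictScalars k I)) = ⊥ := by
      rw [eq_bot_iff]
      intro x hx
      obtain ⟨a, rfl⟩ := MvPolynomial.C_surjective (Fin 0) x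
      rcases eq_or_ne a 0 with rfl | ha
      · simp
      · have h1 := ((mem_homogeneousSubmodule _ _).1
          (Submodule.mem_inf.1 hx).1).totalDegree (by simpa using ha)
        rw [MvPolynomial.totalDegree_C] at h1
        omega
    unfold annDim at key
    rw [hbot, finrank_bot] at key
    omega
  · set j : Fin n := ⟨0, hn⟩ with hj
    have hpX : p * MvPolynomial.X j ≠ 0 :=
      mul_ne_zero hp0 (MvPolynomial.X_ne_zero j)
    obtain ⟨c, hc⟩ := exists_eval_ne hpX
    rw [map_mul, MvPolynomial.eval_X] at hc
    have hc1 : MvPolynomial.eval c p ≠ 0 := fun h => hc (by rw [h, zero_mul])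
    have hc2 : c j ≠ 0 := fun h => hc (by rw [h, mul_zero])
    have key : (n - 1) * annDim k I c (d + 1) < annDim k I c d := hp c hc1
    have := aux_main I c j hc2 d hcon
    omega
end

section
/- Let A = R/I be a graded Artinian level algebra with h-vector (h_0, h_1, …, h_s) and socle degree s. Suppose h_{d−1} > h_d for some d ≥ r_1(A). Then (a) h_{d−1} > h_d > h_{d+1} > … > h_{s−1} > h_s > 0, and (b) h_{t−1} − h_t ≤ (n−1)(h_t − h_{t+1}) for all d ≤ t ≤ s. -/
open MvPolynomial Module Submodule

noncomputable section AuxStmt2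
set_option maxHeartbeats 1000000
set_option synthInstance.maxHeartbeats 400000

variable {k : Type*} [Field k] {n : ℕ}

lemma homogLe (t : ℕ) :
    homogeneousSubmodule (Fin n) k t ≤ restrictTotalDegree (Fin n) k t := by
  intro f hf
  rw [mem_restrictTotalDegree]
  rcases eq_or_ne f 0 with rfl | hf0
  · simp
  · exact le_of_eq (((mem_homogeneousSubmodule _ _).mp hf).totalDegree hf0)

instance homogFD (t : ℕ) : FiniteDimensional k ↥(homogeneousSubmodule (Fin n) k t) :=
  Submodule.finiteDimensional_of_le (homogLe t)

variable (I : Ideal (MvPolynomial (Fin n) k)) (c : Fin n → k)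

/-- degree-t part of I, inside the degree-t space. -/
def Isub (t : ℕ) : Submodule k ↥(homogeneousSubmodule (Fin n) k t) :=
  Submodule.comap (homogeneousSubmodule (Fin n) k t).subtype (Submodule.restrictScalars k I)

lemma mem_Isub {t : ℕ} {f : ↥(homogeneousSubmodule (Fin n) k t)} :
    f ∈ Isub I t ↔ (f : MvPolynomial (Fin n) k) ∈ I := Iff.rfl

/-- the degree-t part of the quotient ring. -/
abbrev Aq (t : ℕ) := ↥(homogeneousSubmodule (Fin n) k t) ⧸ Isub I t

lemma finrank_Isub (t : ℕ) : finrank k ↥(Isub I t) = idim k I t := by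
  have h1 : Isub I t = Submodule.comap (homogeneousSubmodule (Fin n) k t).subtype
      (Submodule.restrictScalars k I ⊓ homogeneousSubmodule (Fin n) k t) := by
    rw [Submodule.comap_inf, Submodule.comap_subtype_self, inf_top_eq, Isub]
  rw [h1, idim]
  exact LinearEquiv.finrank_eq (Submodule.comapSubtypeEquivOfLe inf_le_right)

lemma idim_le (t : ℕ) : idim k I t ≤ finrank k ↥(homogeneousSubmodule (Fin n) k t) := by
  haveI := Submodule.finiteDimensional_of_le
    (inf_le_right : Submodule.restrictScalars k I ⊓ homogeneousSubmodule (Fin n) k t ≤ _)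
  exact Submodule.finrank_mono inf_le_right

lemma hilb_eq_finrank (t : ℕ) : hilb k I t = finrank k (Aq I t) := by
  have h1 : finrank k (Aq I t) + finrank k ↥(Isub I t)
      = finrank k ↥(homogeneousSubmodule (Fin n) k t) :=
    Submodule.finrank_quotient_add_finrank (Isub I t)
  have h2 := finrank_Isub I t
  have h3 := idim_le I t
  rw [hilb]
  omega

/-- multiplication by a linear (degree-1 homogeneous) polynomial. -/
def mulMapV (w : MvPolynomial (Fin n) k) (hw : w ∈ homogeneousSubmodule (Fin n) k 1) (t : ℕ) :
    ↥(homogeneousSubmodule (Fin n) k t) →ₗ[k] ↥(homogeneousSubmodule (Fin n) k (t + 1)) :=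
  (LinearMap.mulLeft k w).restrict (p := homogeneousSubmodule (Fin n) k t) fun f hf => by
    rw [mem_homogeneousSubmodule, LinearMap.mulLeft_apply]
    simpa [Nat.add_comm] using ((mem_homogeneousSubmodule _ _).mp hw).mul
      ((mem_homogeneousSubmodule _ _).mp hf)

lemma mulMap_coe (w : MvPolynomial (Fin n) k) (hw : w ∈ homogeneousSubmodule (Fin n) k 1)
    (t : ℕ) (f : ↥(homogeneousSubmodule (Fin n) k t)) :
    ((mulMapV w hw t f : ↥(homogeneousSubmodule (Fin n) k (t + 1))) : MvPolynomial (Fin n) k)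
      = w * f := rfl

lemma linForm_mem : linForm k c ∈ homogeneousSubmodule (Fin n) k 1 := by
  rw [linForm]
  refine Submodule.sum_mem _ fun i _ => ?_
  rw [mem_homogeneousSubmodule]
  simpa using (isHomogeneous_C (Fin n) (c i)).mul (isHomogeneous_X k i)

lemma X_mem (i : Fin n) : (X i : MvPolynomial (Fin n) k) ∈ homogeneousSubmodule (Fin n) k 1 :=
  (mem_homogeneousSubmodule _ _).mpr (isHomogeneous_X k i)

lemma Isub_le_comap (w : MvPolynomial (Fin n) k) (hw : w ∈ homogeneousSubmodule (Fin n) k 1)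
    (t : ℕ) : Isub I t ≤ Submodule.comap (mulMapV w hw t) (Isub I (t + 1)) := by
  intro f hf
  rw [Submodule.mem_comap, mem_Isub, mulMap_coe]
  exact I.mul_mem_left w ((mem_Isub I).mp hf)

/-- multiplication by the linear form, on quotients. -/
def Lbar (t : ℕ) : Aq I t →ₗ[k] Aq I (t + 1) :=
  Submodule.mapQ _ _ (mulMapV (linForm k c) (linForm_mem c) t)
    (Isub_le_comap I (linForm k c) (linForm_mem c) t)

end AuxStmt2

noncomputable section AuxStmt2b
set_option maxHeartbeats 1000000
set_option synthInstance.maxHeartbeats 400000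
variable {k : Type*} [Field k] {n : ℕ}
variable (I : Ideal (MvPolynomial (Fin n) k)) (c : Fin n → k)

lemma V_le_of_hilb_zero {J : Ideal (MvPolynomial (Fin n) k)} {m : ℕ}
    (hm : hilb k J m = 0) :
    homogeneousSubmodule (Fin n) k m ≤ Submodule.restrictScalars k J := by
  have h1 : finrank k ↥(homogeneousSubmodule (Fin n) k m) ≤ idim k J m := by
    have h3 := idim_le J m
    rw [hilb] at hm
    omega
  have h2 := Submodule.eq_of_le_of_finrank_le
    (inf_le_right : Submodule.restrictScalars k J ⊓ homogeneousSubmodule (Fin n) k m ≤ _) h1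
  intro x hx
  have hx2 : x ∈ Submodule.restrictScalars k J ⊓ homogeneousSubmodule (Fin n) k m := by
    rw [h2]; exact hx
  exact hx2.1

lemma hilb_zero_of_le {J : Ideal (MvPolynomial (Fin n) k)} {m : ℕ}
    (h : homogeneousSubmodule (Fin n) k m ≤ Submodule.restrictScalars k J) :
    hilb k J m = 0 := by
  rw [hilb, idim, inf_eq_right.mpr h]
  omega

lemma degree_add' (a b : Fin n →₀ ℕ) :
    Finsupp.degree (a + b) = Finsupp.degree a + Finsupp.degree b := by
  exact map_add _ a b

lemma degree_single' (i : Fin n) (e : ℕ) : Finsupp.degree (Finsupp.single i e) = e := by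
  rcases eq_or_ne e 0 with rfl | he
  · simp [Finsupp.degree]
  · rw [Finsupp.degree_apply, Finsupp.support_single_ne_zero i he, Finset.sum_singleton,
      Finsupp.single_eq_same]

lemma hilb_zero_succ {J : Ideal (MvPolynomial (Fin n) k)} {m : ℕ}
    (hm : hilb k J m = 0) : hilb k J (m + 1) = 0 := by
  apply hilb_zero_of_le
  have hVm := V_le_of_hilb_zero hm
  intro f hf
  have hf' := (mem_homogeneousSubmodule _ _).mp hf
  nth_rewrite 1 [f.as_sum]
  refine Submodule.sum_mem _ fun μ hμ => ?_
  have hdeg : Finsupp.degree μ = m + 1 := by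
    rw [Finsupp.degree_eq_weight_one]
    exact hf' (mem_support_iff.mp hμ)
  obtain ⟨i, hi⟩ : ∃ i, μ i ≠ 0 := by
    by_contra hall
    push_neg at hall
    have : μ = 0 := Finsupp.ext fun i => hall i
    rw [this, map_zero] at hdeg
    omega
  have hsub : μ - Finsupp.single i 1 + Finsupp.single i 1 = μ :=
    tsub_add_cancel_of_le (by rwa [Finsupp.single_le_iff, Nat.one_le_iff_ne_zero])
  have hdeg' : Finsupp.degree (μ - Finsupp.single i 1) = m := by
    have h2 := congrArg Finsupp.degree hsub
    rw [degree_add', degree_single', hdeg] at h2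
    omega
  have hmem : monomial (μ - Finsupp.single i 1) (coeff μ f) ∈ Submodule.restrictScalars k J :=
    hVm ((mem_homogeneousSubmodule _ _).mpr (isHomogeneous_monomial _ hdeg'))
  have heq : monomial μ (coeff μ f) = X i * monomial (μ - Finsupp.single i 1) (coeff μ f) := by
    nth_rewrite 1 [← hsub]
    rw [add_comm, monomial_single_add, pow_one]
  rw [heq]
  exact J.mul_mem_left _ hmem

lemma hilb_zero_mono {J : Ideal (MvPolynomial (Fin n) k)} {m m' : ℕ} (hmm : m ≤ m')
    (hm : hilb k J m = 0) : hilb k J m' = 0 := by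
  induction m', hmm using Nat.le_induction with
  | base => exact hm
  | succ m' hmm ih => exact hilb_zero_succ ih

lemma homogComp_mul {w : MvPolynomial (Fin n) k} (hw : w ∈ homogeneousSubmodule (Fin n) k 1)
    (f : MvPolynomial (Fin n) k) (m : ℕ) :
    homogeneousComponent (m + 1) (f * w) = homogeneousComponent m f * w := by
  conv_lhs => rw [← sum_homogeneousComponent f]
  rw [Finset.sum_mul, map_sum]
  have hterm : ∀ i, homogeneousComponent (m + 1) (homogeneousComponent i f * w)
      = if i = m then homogeneousComponent i f * w else 0 := by
    intro i
    have hmem : homogeneousComponent i f * w ∈ homogeneousSubmodule (Fin n) k (i + 1) := by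
      rw [mem_homogeneousSubmodule]
      exact (homogeneousComponent_isHomogeneous i f).mul ((mem_homogeneousSubmodule _ _).mp hw)
    rw [homogeneousComponent_of_mem hmem]
    congr 1
    simp [eq_comm]
  rw [Finset.sum_congr rfl fun i _ => hterm i, Finset.sum_ite_eq' (Finset.range (f.totalDegree + 1)) m]
  by_cases hm : m ∈ Finset.range (f.totalDegree + 1)
  · rw [if_pos hm]
  · rw [if_neg hm, homogeneousComponent_eq_zero, zero_mul]
    simp only [Finset.mem_range] at hm
    omega

lemma exists_rep (hI : IsHomogIdeal k I) {m : ℕ}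
    (hm : hilb k (I ⊔ Ideal.span {linForm k c}) (m + 1) = 0)
    (v : MvPolynomial (Fin n) k) (hv : v ∈ homogeneousSubmodule (Fin n) k (m + 1)) :
    ∃ g ∈ homogeneousSubmodule (Fin n) k m, v - linForm k c * g ∈ I := by
  have h1 : v ∈ Submodule.restrictScalars k (I ⊔ Ideal.span {linForm k c}) :=
    V_le_of_hilb_zero hm hv
  rw [Submodule.restrictScalars_mem, Submodule.mem_sup] at h1
  obtain ⟨y, hy, z, hz, hyz⟩ := h1
  rw [Ideal.mem_span_singleton'] at hz
  obtain ⟨f, rfl⟩ := hz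
  refine ⟨homogeneousComponent m f, homogeneousComponent_mem m f, ?_⟩
  have hv' : homogeneousComponent (m + 1) v = v := by
    rw [homogeneousComponent_of_mem hv, if_pos rfl]
  have hvy : v = homogeneousComponent (m + 1) y + homogeneousComponent m f * linForm k c := by
    conv_lhs => rw [← hv', ← hyz]
    rw [map_add, homogComp_mul (linForm_mem c) f m]
  rw [hvy, mul_comm (linForm k c) _, add_sub_cancel_right]
  exact hI y hy (m + 1)

end AuxStmt2b

noncomputable section AuxStmt2c
set_option maxHeartbeats 1000000
set_option synthInstance.maxHeartbeats 400000
variable {k : Type*} [Field k] {n : ℕ}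
variable (I : Ideal (MvPolynomial (Fin n) k)) (c : Fin n → k)

lemma Lbar_surj (hI : IsHomogIdeal k I) {m : ℕ}
    (hm : hilb k (I ⊔ Ideal.span {linForm k c}) (m + 1) = 0) :
    Function.Surjective (Lbar I c m) := by
  intro y
  obtain ⟨v, rfl⟩ := Submodule.Quotient.mk_surjective _ y
  obtain ⟨g, hg, hgI⟩ := exists_rep I c hI hm v v.2
  refine ⟨Submodule.Quotient.mk ⟨g, hg⟩, ?_⟩
  rw [Lbar, Submodule.mapQ_apply, Submodule.Quotient.eq]
  rw [mem_Isub]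
  have hco : ((mulMapV (linForm k c) (linForm_mem c) m ⟨g, hg⟩ - v :
      ↥(homogeneousSubmodule (Fin n) k (m + 1))) : MvPolynomial (Fin n) k)
      = linForm k c * g - v := rfl
  rw [hco]
  simpa using I.neg_mem hgI

/-- multiplication by `L` is injective (mod `I`) in degree `t`. -/
def InjDeg (t : ℕ) : Prop :=
  ∀ f ∈ homogeneousSubmodule (Fin n) k t, linForm k c * f ∈ I → f ∈ I

lemma Lbar_mk_eq_zero {t : ℕ} {f : ↥(homogeneousSubmodule (Fin n) k t)} :
    Lbar I c t (Submodule.Quotient.mk f) = 0 ↔ linForm k c * (f : MvPolynomial (Fin n) k) ∈ I := by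
  rw [Lbar, Submodule.mapQ_apply, Submodule.Quotient.mk_eq_zero, mem_Isub, mulMap_coe]

lemma injDeg_of_ker {t : ℕ} (hk : finrank k ↥(LinearMap.ker (Lbar I c t)) = 0) :
    InjDeg I c t := by
  have hbot : LinearMap.ker (Lbar I c t) = ⊥ := Submodule.finrank_eq_zero.mp hk
  intro f hf hLf
  have h1 : Lbar I c t (Submodule.Quotient.mk ⟨f, hf⟩) = 0 := (Lbar_mk_eq_zero I c).mpr hLf
  have h2 : Submodule.Quotient.mk (p := Isub I t) ⟨f, hf⟩ = 0 := by
    have := LinearMap.mem_ker.mpr h1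
    rwa [hbot, Submodule.mem_bot] at this
  rwa [Submodule.Quotient.mk_eq_zero, mem_Isub] at h2

lemma Lbar_inj_of_injDeg {t : ℕ} (h : InjDeg I c t) : Function.Injective (Lbar I c t) := by
  rw [← LinearMap.ker_eq_bot]
  rw [Submodule.eq_bot_iff]
  intro x hx
  obtain ⟨v, rfl⟩ := Submodule.Quotient.mk_surjective _ x
  rw [LinearMap.mem_ker, Lbar_mk_eq_zero] at hx
  rw [Submodule.Quotient.mk_eq_zero, mem_Isub]
  exact h v v.2 hx

lemma hilb_le_of_injDeg {t : ℕ} (h : InjDeg I c t) : hilb k I t ≤ hilb k I (t + 1) := by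
  rw [hilb_eq_finrank, hilb_eq_finrank]
  exact LinearMap.finrank_le_finrank_of_injective (Lbar_inj_of_injDeg I c h)

lemma injDeg_down {s : ℕ} (hlev : IsLevel k I s) {m : ℕ} (hm : m ≠ s)
    (hinj : InjDeg I c (m + 1)) : InjDeg I c m := by
  intro f hf hLf
  have hx : ∀ i : Fin n, X i * f ∈ I := by
    intro i
    apply hinj (X i * f)
    · rw [mem_homogeneousSubmodule]
      simpa [Nat.add_comm] using (isHomogeneous_X k i).mul ((mem_homogeneousSubmodule _ _).mp hf)
    · have heq : linForm k c * (X i * f) = X i * (linForm k c * f) := by ring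
      rw [heq]
      exact I.mul_mem_left _ hLf
  apply hlev m hm f
  simp only [socPiece, Submodule.mem_inf, Submodule.mem_iInf, Submodule.mem_comap,
    LinearMap.mulLeft_apply, Submodule.restrictScalars_mem]
  exact ⟨hf, hx⟩

lemma injDeg_downto {s : ℕ} (hlev : IsLevel k I s) :
    ∀ t, t ≤ s → InjDeg I c t → ∀ m, m ≤ t → InjDeg I c m := by
  intro t
  induction t with
  | zero =>
    intro _ ht m hm
    have : m = 0 := by omega
    rwa [this]
  | succ t ih =>
    intro hts hinj m hm
    rcases eq_or_lt_of_le hm with rfl | hlt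
    · exact hinj
    · have h1 : InjDeg I c t := injDeg_down I c hlev (by omega) hinj
      exact ih (by omega) h1 m (by omega)

end AuxStmt2c

noncomputable section AuxStmt2d
set_option maxHeartbeats 1000000
set_option synthInstance.maxHeartbeats 400000
variable {k : Type*} [Field k] {n : ℕ}
variable (I : Ideal (MvPolynomial (Fin n) k)) (c : Fin n → k)

lemma hilb_rank_nullity (t : ℕ) :
    finrank k ↥(LinearMap.range (Lbar I c t)) + finrank k ↥(LinearMap.ker (Lbar I c t))
      = hilb k I t := by
  rw [hilb_eq_finrank]
  exact LinearMap.finrank_range_add_finrank_ker (Lbar I c t)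

lemma ker_finrank_of_surj {t : ℕ} (hs : Function.Surjective (Lbar I c t)) :
    hilb k I (t + 1) + finrank k ↥(LinearMap.ker (Lbar I c t)) = hilb k I t := by
  have h1 := hilb_rank_nullity I c t
  rw [LinearMap.range_eq_top.mpr hs, finrank_top] at h1
  rw [hilb_eq_finrank I (t+1)]
  exact h1

lemma partA (hI : IsHomogIdeal k I) (h : ℕ → ℕ) (hh : ∀ t, hilb k I t = h t)
    (s : ℕ) (hlev : IsLevel k I s)
    (d : ℕ) (hdec : h d < h (d - 1))
    (ℓ : ℕ) (hld : ℓ ≤ d)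
    (hc0 : hilb k (I ⊔ Ideal.span {linForm k c}) (ℓ + 1) = 0) :
    ∀ t, d ≤ t → t ≤ s → h t < h (t - 1) := by
  have hd1 : 1 ≤ d := by
    by_contra h0
    push_neg at h0
    interval_cases d
    · simp only [Nat.zero_sub] at hdec
      omega
  intro t htd hts
  by_contra hle
  push_neg at hle
  rcases eq_or_lt_of_le htd with rfl | hlt
  · omega
  · obtain ⟨u, rfl⟩ : ∃ u, t = u + 1 := ⟨t - 1, by omega⟩
    have hsurj : Function.Surjective (Lbar I c u) :=
      Lbar_surj I c hI (hilb_zero_mono (by omega) hc0)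
    have h1 := ker_finrank_of_surj I c hsurj
    rw [hh, hh] at h1
    have hle' : h u ≤ h (u + 1) := by simpa using hle
    have hker : finrank k ↥(LinearMap.ker (Lbar I c u)) = 0 := by omega
    have hinj : InjDeg I c u := injDeg_of_ker I c hker
    have hinj' : InjDeg I c (d - 1) :=
      injDeg_downto I c hlev u (by omega) hinj (d - 1) (by omega)
    have h2 := hilb_le_of_injDeg I c hinj'
    rw [hh, hh] at h2
    have hd1' : d - 1 + 1 = d := by omega
    rw [hd1'] at h2
    omega

end AuxStmt2d

noncomputable section AuxStmt2e
set_option maxHeartbeats 1000000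
set_option synthInstance.maxHeartbeats 400000
variable {k : Type*} [Field k] {n : ℕ}
variable (I : Ideal (MvPolynomial (Fin n) k)) (c : Fin n → k)

/-- degree-t part of (I : L), as a submodule of the polynomial ring. -/
def KsubR (t : ℕ) : Submodule k (MvPolynomial (Fin n) k) :=
  homogeneousSubmodule (Fin n) k t ⊓
    Submodule.comap (LinearMap.mulLeft k (linForm k c)) (Submodule.restrictScalars k I)

lemma mem_KsubR {t : ℕ} {f : MvPolynomial (Fin n) k} :
    f ∈ KsubR I c t ↔ f ∈ homogeneousSubmodule (Fin n) k t ∧ linForm k c * f ∈ I := by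
  simp only [KsubR, Submodule.mem_inf, Submodule.mem_comap, LinearMap.mulLeft_apply,
    Submodule.restrictScalars_mem]

lemma KsubR_le (t : ℕ) : KsubR I c t ≤ homogeneousSubmodule (Fin n) k t := inf_le_left

lemma IV_le_KsubR (t : ℕ) :
    Submodule.restrictScalars k I ⊓ homogeneousSubmodule (Fin n) k t ≤ KsubR I c t := by
  intro v hv
  exact (mem_KsubR I c).mpr ⟨hv.2, I.mul_mem_left _ hv.1⟩

instance KsubR_fd (t : ℕ) : FiniteDimensional k ↥(KsubR I c t) :=
  Submodule.finiteDimensional_of_le (KsubR_le I c t)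

/-- the natural map from the degree-t part of (I:L) to A_t, with image ker(·L) and
kernel the degree-t part of I. -/
def Fmap (t : ℕ) : ↥(KsubR I c t) →ₗ[k] Aq I t :=
  (Isub I t).mkQ.comp (Submodule.inclusion (KsubR_le I c t))

lemma Fmap_apply (t : ℕ) (v : ↥(KsubR I c t)) :
    Fmap I c t v = Submodule.Quotient.mk (Submodule.inclusion (KsubR_le I c t) v) := rfl

lemma range_Fmap (t : ℕ) : LinearMap.range (Fmap I c t) = LinearMap.ker (Lbar I c t) := by
  ext x
  constructor
  · rintro ⟨g, rfl⟩
    rw [LinearMap.mem_ker, Fmap_apply, Lbar_mk_eq_zero]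
    exact ((mem_KsubR I c).mp g.2).2
  · intro hx
    obtain ⟨v, rfl⟩ := Submodule.Quotient.mk_surjective _ x
    rw [LinearMap.mem_ker, Lbar_mk_eq_zero] at hx
    refine ⟨⟨(v : MvPolynomial (Fin n) k), (mem_KsubR I c).mpr ⟨v.2, hx⟩⟩, ?_⟩
    rw [Fmap_apply]
    rfl

lemma ker_Fmap (t : ℕ) : LinearMap.ker (Fmap I c t)
    = Submodule.comap (KsubR I c t).subtype
        (Submodule.restrictScalars k I ⊓ homogeneousSubmodule (Fin n) k t) := by
  ext v
  simp only [LinearMap.mem_ker, Fmap_apply, Submodule.Quotient.mk_eq_zero, mem_Isub,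
    Submodule.mem_comap, Submodule.coe_subtype, Submodule.mem_inf,
    Submodule.restrictScalars_mem]
  constructor
  · intro h
    exact ⟨h, v.2.1⟩
  · intro h
    exact h.1

lemma finrank_ker_Fmap (t : ℕ) : finrank k ↥(LinearMap.ker (Fmap I c t)) = idim k I t := by
  rw [ker_Fmap, idim]
  exact LinearEquiv.finrank_eq (Submodule.comapSubtypeEquivOfLe (IV_le_KsubR I c t))

lemma finrank_ker_Lbar (t : ℕ) :
    finrank k ↥(LinearMap.ker (Lbar I c t)) + idim k I t = finrank k ↥(KsubR I c t) := by
  have h1 := LinearMap.finrank_range_add_finrank_ker (Fmap I c t)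
  rw [range_Fmap, finrank_ker_Fmap] at h1
  exact h1

/-- the map sending `f` with `Lf ∈ I` to the class of `X i * f`, which kills `L` mod `I`. -/
def XmapKer (i : Fin n) (u : ℕ) :
    ↥(KsubR I c u) →ₗ[k] ↥(LinearMap.ker (Lbar I c (u + 1))) :=
  LinearMap.codRestrict _
    ((Isub I (u + 1)).mkQ.comp ((mulMapV (X i) (X_mem i) u).comp
      (Submodule.inclusion (KsubR_le I c u))))
    (by
      intro g
      rw [LinearMap.mem_ker]
      show Lbar I c (u + 1) (Submodule.Quotient.mk _) = 0
      rw [Lbar_mk_eq_zero, LinearMap.comp_apply, mulMap_coe]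
      have heq : linForm k c * (X i * (g : MvPolynomial (Fin n) k))
          = X i * (linForm k c * (g : MvPolynomial (Fin n) k)) := by ring
      rw [show ((Submodule.inclusion (KsubR_le I c u) g : ↥(homogeneousSubmodule (Fin n) k u)) :
        MvPolynomial (Fin n) k) = (g : MvPolynomial (Fin n) k) from rfl, heq]
      exact I.mul_mem_left _ ((mem_KsubR I c).mp g.2).2)

def Theta (i₀ : Fin n) (u : ℕ) :
    ↥(KsubR I c u) →ₗ[k] ({ i : Fin n // i ≠ i₀ } → ↥(LinearMap.ker (Lbar I c (u + 1)))) :=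
  LinearMap.pi fun i => XmapKer I c i.1 u

lemma Theta_apply_coe (i₀ : Fin n) (u : ℕ) (g : ↥(KsubR I c u)) (i : { i : Fin n // i ≠ i₀ }) :
    ((Theta I c i₀ u g i : Aq I (u + 1)))
      = Submodule.Quotient.mk (mulMapV (X i.1) (X_mem i.1) u
          (Submodule.inclusion (KsubR_le I c u) g)) := rfl

lemma ker_Theta {s : ℕ} (hlev : IsLevel k I s) (i₀ : Fin n) (hc : c i₀ ≠ 0)
    {u : ℕ} (hu : u ≠ s) :
    LinearMap.ker (Theta I c i₀ u) = Submodule.comap (KsubR I c u).subtype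
      (Submodule.restrictScalars k I ⊓ homogeneousSubmodule (Fin n) k u) := by
  ext g
  simp only [LinearMap.mem_ker, Submodule.mem_comap, Submodule.coe_subtype, Submodule.mem_inf,
    Submodule.restrictScalars_mem]
  constructor
  · intro hg
    refine ⟨?_, ((mem_KsubR I c).mp g.2).1⟩
    set G : MvPolynomial (Fin n) k := (g : MvPolynomial (Fin n) k) with hGdef
    have hXi : ∀ i : Fin n, i ≠ i₀ → X i * G ∈ I := by
      intro i hi
      have h1 : ((Theta I c i₀ u g ⟨i, hi⟩ : Aq I (u + 1))) = 0 := by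
        rw [hg]
        rfl
      rw [Theta_apply_coe, Submodule.Quotient.mk_eq_zero, mem_Isub, mulMap_coe] at h1
      exact h1
    have hL : linForm k c * G ∈ I := ((mem_KsubR I c).mp g.2).2
    have hsum : linForm k c * G = ∑ i, MvPolynomial.C (c i) * (X i * G) := by
      rw [linForm, Finset.sum_mul]
      exact Finset.sum_congr rfl fun i _ => by ring
    have hrest : ∑ i ∈ Finset.univ.erase i₀, MvPolynomial.C (c i) * (X i * G) ∈ I :=
      Submodule.sum_mem _ fun i hi => I.mul_mem_left _ (hXi i (Finset.ne_of_mem_erase hi))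
    have hi0 : MvPolynomial.C (c i₀) * (X i₀ * G) ∈ I := by
      have h0 : MvPolynomial.C (c i₀) * (X i₀ * G)
          = linForm k c * G - ∑ i ∈ Finset.univ.erase i₀, MvPolynomial.C (c i) * (X i * G) := by
        rw [hsum, ← Finset.add_sum_erase _ _ (Finset.mem_univ i₀)]
        ring
      rw [h0]
      exact I.sub_mem hL hrest
    have hXi0 : X i₀ * G ∈ I := by
      have h0 : X i₀ * G = MvPolynomial.C (c i₀)⁻¹ * (MvPolynomial.C (c i₀) * (X i₀ * G)) := by
        rw [← mul_assoc, ← MvPolynomial.C_mul, inv_mul_cancel₀ hc, MvPolynomial.C_1, one_mul]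
      rw [h0]
      exact I.mul_mem_left _ hi0
    apply hlev u hu G
    simp only [socPiece, Submodule.mem_inf, Submodule.mem_iInf, Submodule.mem_comap,
      LinearMap.mulLeft_apply, Submodule.restrictScalars_mem]
    refine ⟨((mem_KsubR I c).mp g.2).1, fun i => ?_⟩
    rcases eq_or_ne i i₀ with rfl | hne
    · exact hXi0
    · exact hXi i hne
  · intro hg
    funext i
    apply Subtype.ext
    have hz : ((0 : { i : Fin n // i ≠ i₀ } → ↥(LinearMap.ker (Lbar I c (u + 1)))) i :
        Aq I (u + 1)) = 0 := rfl
    rw [hz, Theta_apply_coe, Submodule.Quotient.mk_eq_zero, mem_Isub, mulMap_coe]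
    exact I.mul_mem_left _ hg.1

end AuxStmt2e

noncomputable section AuxStmt2f
set_option maxHeartbeats 1000000
set_option synthInstance.maxHeartbeats 400000
variable {k : Type*} [Field k] {n : ℕ}
variable (I : Ideal (MvPolynomial (Fin n) k)) (c : Fin n → k)

lemma partB (hI : IsHomogIdeal k I) (h : ℕ → ℕ) (hh : ∀ t, hilb k I t = h t)
    (s : ℕ) (hlev : IsLevel k I s)
    (d : ℕ) (hdec : h d < h (d - 1))
    (ℓ : ℕ) (hld : ℓ ≤ d)
    (hc0 : hilb k (I ⊔ Ideal.span {linForm k c}) (ℓ + 1) = 0)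
    (i₀ : Fin n) (hci : c i₀ ≠ 0) (hn : 1 ≤ n)
    (t : ℕ) (htd : d ≤ t) (hts : t ≤ s) :
    (h (t - 1) : ℤ) - h t ≤ ((n : ℤ) - 1) * ((h t : ℤ) - h (t + 1)) := by
  have hd1 : 1 ≤ d := by
    by_contra h0
    push_neg at h0
    interval_cases d
    · simp only [Nat.zero_sub] at hdec
      omega
  obtain ⟨u, rfl⟩ : ∃ u, t = u + 1 := ⟨t - 1, by omega⟩
  set a0 := finrank k ↥(LinearMap.ker (Lbar I c u)) with ha0
  set a1 := finrank k ↥(LinearMap.ker (Lbar I c (u + 1))) with ha1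
  have hf1 : h u ≤ h (u + 1) + a0 := by
    have h1 := hilb_rank_nullity I c u
    have h2 : finrank k ↥(LinearMap.range (Lbar I c u)) ≤ hilb k I (u + 1) := by
      rw [hilb_eq_finrank]
      exact Submodule.finrank_le _
    rw [hh] at h1
    rw [hh] at h2
    omega
  have hsurj : Function.Surjective (Lbar I c (u + 1)) :=
    Lbar_surj I c hI (hilb_zero_mono (by omega) hc0)
  have hf2 : h (u + 1 + 1) + a1 = h (u + 1) := by
    have h3 := ker_finrank_of_surj I c hsurj
    rw [hh, hh] at h3
    exact h3
  have hcard : Fintype.card { i : Fin n // i ≠ i₀ } = n - 1 := by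
    simp [Ne, Fintype.card_subtype_compl, Fintype.card_subtype_eq]
  have hf3 : a0 ≤ (n - 1) * a1 := by
    have hrn := LinearMap.finrank_range_add_finrank_ker (Theta I c i₀ u)
    have hker : finrank k ↥(LinearMap.ker (Theta I c i₀ u)) = idim k I u := by
      rw [ker_Theta I c hlev i₀ hci (show u ≠ s by omega), idim]
      exact LinearEquiv.finrank_eq (Submodule.comapSubtypeEquivOfLe (IV_le_KsubR I c u))
    have hcodim : finrank k ({ i : Fin n // i ≠ i₀ } → ↥(LinearMap.ker (Lbar I c (u + 1))))
        = (n - 1) * a1 := by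
      rw [Module.finrank_pi_fintype, Finset.sum_const, smul_eq_mul, Finset.card_univ, hcard]
    have hrange : finrank k ↥(LinearMap.range (Theta I c i₀ u)) ≤ (n - 1) * a1 := by
      have hle := Submodule.finrank_le (LinearMap.range (Theta I c i₀ u))
      omega
    have hK := finrank_ker_Lbar I c u
    omega
  have hcast : ((n - 1 : ℕ) : ℤ) = (n : ℤ) - 1 := by omega
  have hf3' : (a0 : ℤ) ≤ ((n : ℤ) - 1) * a1 := by
    rw [← hcast]
    exact_mod_cast hf3
  have e2 : (h (u + 1) : ℤ) - h (u + 1 + 1) = (a1 : ℤ) := by omega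
  rw [show u + 1 - 1 = u from rfl, e2]
  have e1 : (h u : ℤ) - h (u + 1) ≤ (a0 : ℤ) := by omega
  exact le_trans e1 hf3'

end AuxStmt2f

noncomputable section AuxStmt2g
set_option maxHeartbeats 1000000
set_option synthInstance.maxHeartbeats 400000
variable {k : Type*} [Field k] {n : ℕ}

lemma hilb_antitone {I J : Ideal (MvPolynomial (Fin n) k)} (hIJ : I ≤ J) (t : ℕ) :
    hilb k J t ≤ hilb k I t := by
  rw [hilb, hilb]
  apply Nat.sub_le_sub_left
  haveI := Submodule.finiteDimensional_of_le
    (inf_le_right : Submodule.restrictScalars k J ⊓ homogeneousSubmodule (Fin n) k t ≤ _)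
  exact Submodule.finrank_mono (inf_le_inf_right _ hIJ)

lemma n_pos_of_hilb {I : Ideal (MvPolynomial (Fin n) k)} {s : ℕ} (hs1 : 1 ≤ s)
    (hs : hilb k I s ≠ 0) : 1 ≤ n := by
  by_contra h0
  push_neg at h0
  interval_cases n
  apply hs
  have hbot : homogeneousSubmodule (Fin 0) k s = ⊥ := by
    ext f
    simp only [mem_homogeneousSubmodule, Submodule.mem_bot]
    constructor
    · intro hf
      ext μ
      rw [coeff_zero]
      by_contra hc
      have h1 := hf hc
      have h2 : μ = 0 := Subsingleton.elim _ _
      rw [h2, map_zero] at h1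
      omega
    · rintro rfl
      exact isHomogeneous_zero _ _ _
  have h3 : finrank k ↥(homogeneousSubmodule (Fin 0) k s) = 0 := by
    rw [hbot]
    exact finrank_bot k _
  rw [hilb, h3]
  omega

lemma exists_eval_ne_zero [Infinite k] {p : MvPolynomial (Fin n) k} (hp : p ≠ 0) :
    ∃ c : Fin n → k, MvPolynomial.eval c p ≠ 0 := by
  by_contra hall
  push_neg at hall
  exact hp (MvPolynomial.funext fun x => by rw [hall x, map_zero])

end AuxStmt2g

/-- For a graded Artinian level algebra `A = R/I` with h-vector
`(h_0,…,h_s)`, if `h_{d-1} > h_d` for some `d ≥ r₁(A)`, then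
(a) `h_{d-1} > h_d > ⋯ > h_s > 0`, and
(b) `h_{t-1} − h_t ≤ (n−1)(h_t − h_{t+1})` for all `d ≤ t ≤ s`. -/
theorem stmt_2 {k : Type*} [Field k] [CharZero k] {n : ℕ}
    (I : Ideal (MvPolynomial (Fin n) k)) (hI : IsHomogIdeal k I)
    (h : ℕ → ℕ) (hh : ∀ t, hilb k I t = h t)
    (s : ℕ) (hs : h s ≠ 0) (hart : ∀ t, s < t → h t = 0)
    (hlev : IsLevel k I s)
    (d : ℕ) (hd : redNum k I ≤ d) (hdec : h d < h (d - 1)) :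
    ((∀ t : ℕ, d ≤ t → t ≤ s → h t < h (t - 1)) ∧ 0 < h s) ∧
    (∀ t : ℕ, d ≤ t → t ≤ s →
      (h (t - 1) : ℤ) - h t ≤ ((n : ℤ) - 1) * ((h t : ℤ) - h (t + 1))) := by
  have hd1 : 1 ≤ d := by
    by_contra h0
    push_neg at h0
    interval_cases d
    · simp only [Nat.zero_sub] at hdec
      omega
  haveI : Infinite k := CharZero.infinite k
  have hSne : {ℓ : ℕ | Generic k fun c : Fin n → k =>
      hilb k (I ⊔ Ideal.span {linForm k c}) (ℓ + 1) = 0}.Nonempty := by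
    refine ⟨s, ⟨1, one_ne_zero, fun c _ => ?_⟩⟩
    have h1 : hilb k I (s + 1) = 0 := by rw [hh]; exact hart _ (by omega)
    have h2 := hilb_antitone (le_sup_left : I ≤ I ⊔ Ideal.span {linForm k c}) (s + 1)
    omega
  have hmem : redNum k I ∈ {ℓ : ℕ | Generic k fun c : Fin n → k =>
      hilb k (I ⊔ Ideal.span {linForm k c}) (ℓ + 1) = 0} := Nat.sInf_mem hSne
  obtain ⟨p, hp0, hp⟩ := hmem
  refine ⟨⟨?_, Nat.pos_of_ne_zero hs⟩, ?_⟩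
  · obtain ⟨c, hcp⟩ := exists_eval_ne_zero hp0
    exact partA I c hI h hh s hlev d hdec (redNum k I) hd (hp c hcp)
  · intro t htd hts
    have hs1 : 1 ≤ s := by omega
    have hn : 1 ≤ n := n_pos_of_hilb hs1 (by rw [hh]; exact hs)
    set i₀ : Fin n := ⟨0, hn⟩ with hi₀
    have hq0 : p * X i₀ ≠ 0 := mul_ne_zero hp0 (MvPolynomial.X_ne_zero i₀)
    obtain ⟨c, hcq⟩ := exists_eval_ne_zero hq0
    rw [map_mul] at hcq
    have hcp : MvPolynomial.eval c p ≠ 0 := fun hz => hcq (by rw [hz, zero_mul])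
    have hci : c i₀ ≠ 0 := by
      intro hz
      apply hcq
      rw [MvPolynomial.eval_X, hz, mul_zero]
    exact partB I c hI h hh s hlev d hdec (redNum k I) hd (hp c hcp) i₀ hci hn t htd hts
end
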